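/- Let x > 1 and β > 0 be real numbers, and let B ≥ 1 be a real number satisfying x^B ≤ β·B + 1. Then B ≤ (x/(x−1)) · (e/(e−1)) · ( log(1+β) + log(x/(x−1)) ). -/

import Mathlib

/-- Let `x > 1` and `β > 0` be reals, and let `B ≥ 1` be a real number
satisfying `x^B ≤ β·B + 1`. Then
`B ≤ (x/(x−1)) · (e/(e−1)) · (log(1+β) + log(x/(x−1)))`. -/
theorem stmt16 (x β B : ℝ) (hx : 1 < x) (hβ : 0 < β) (hB : 1 ≤ B)
    (h : x ^ B ≤ β * B + 1) :
    B ≤ (x / (x - 1)) * (Real.exp 1 / (Real.exp 1 - 1))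
      * (Real.log (1 + β) + Real.log (x / (x - 1))) := by
  have hx0 : 0 < x := by linarith
  have hx1 : 0 < x - 1 := by linarith
  set c := x / (x - 1) with hcdef
  have hc1 : 1 < c := by
    rw [hcdef, lt_div_iff₀ hx1]; linarith
  have hc0 : 0 < c := by linarith
  have hB0 : 0 < B := by linarith
  have he : (1:ℝ) < Real.exp 1 := by
    have := Real.exp_one_gt_d9; linarith
  have he0 : (0:ℝ) < Real.exp 1 := by linarith
  -- log x ≥ (x-1)/x
  have hlogx : (x - 1) / x ≤ Real.log x := by
    have h1 := Real.log_le_sub_one_of_pos (show (0:ℝ) < 1 / x by positivity)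
    rw [Real.log_div one_ne_zero (ne_of_gt hx0), Real.log_one] at h1
    have hx' : 1 / x - 1 = -((x - 1) / x) := by field_simp; ring
    linarith [hx' ▸ h1]
  -- B * log x ≤ log(1+β) + log B
  have h1 : B * Real.log x ≤ Real.log (1 + β) + Real.log B := by
    have hpow : Real.log (x ^ B) = B * Real.log x := Real.log_rpow hx0 B
    have h2 : Real.log (x ^ B) ≤ Real.log ((1 + β) * B) := by
      apply Real.log_le_log (Real.rpow_pos_of_pos hx0 B)
      nlinarith
    rwa [hpow, Real.log_mul (by positivity) (ne_of_gt hB0)] at h2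
  -- log B ≤ log c + B/(c*e)
  have h3 : Real.log B ≤ Real.log c + B / (c * Real.exp 1) := by
    have hz : (0:ℝ) < B / (c * Real.exp 1) := by positivity
    have h4 := Real.log_le_sub_one_of_pos hz
    rw [Real.log_div (ne_of_gt hB0) (by positivity),
      Real.log_mul (ne_of_gt hc0) (by positivity), Real.log_exp] at h4
    linarith
  have hkey : B * ((x - 1) / x) ≤ Real.log (1 + β) + Real.log c + B / (c * Real.exp 1) := by
    nlinarith [mul_le_mul_of_nonneg_left hlogx (le_of_lt hB0)]
  have hcx : c * ((x - 1) / x) = 1 := by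
    rw [hcdef]; field_simp
  have hce : c * Real.exp 1 * (B / (c * Real.exp 1)) = B := by
    field_simp
  have hfin : B * (Real.exp 1 - 1) ≤ c * Real.exp 1 * (Real.log (1 + β) + Real.log c) := by
    have h5 := mul_le_mul_of_nonneg_left hkey (le_of_lt (show (0:ℝ) < c * Real.exp 1 by positivity))
    have hL : c * Real.exp 1 * (B * ((x - 1) / x)) = B * Real.exp 1 := by
      calc c * Real.exp 1 * (B * ((x - 1) / x))
          = (c * ((x - 1) / x)) * (B * Real.exp 1) := by ring
        _ = B * Real.exp 1 := by rw [hcx]; ring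
    have hR : c * Real.exp 1 * (Real.log (1 + β) + Real.log c + B / (c * Real.exp 1))
        = c * Real.exp 1 * (Real.log (1 + β) + Real.log c)
          + c * Real.exp 1 * (B / (c * Real.exp 1)) := by ring
    rw [hL, hR, hce] at h5
    linarith
  have he1 : (0:ℝ) < Real.exp 1 - 1 := by linarith
  have heq : c * (Real.exp 1 / (Real.exp 1 - 1)) * (Real.log (1 + β) + Real.log c)
      = c * Real.exp 1 * (Real.log (1 + β) + Real.log c) / (Real.exp 1 - 1) := by
    field_simp
  rw [heq, le_div_iff₀ he1]
  linarith [hfin]
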